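/- A labeled graph G on [n] is 12-representable by a 231-avoiding word if and only if there do not exist vertices x < y < z with (xz ∈ E and yz ∉ E) and there do not exist vertices x < y < z with (xy ∈ E and yz ∈ E and xz ∉ E). -/

import Mathlib

/-- Every occurrence of `j` precedes every occurrence of `i` in the word `w`. -/
def EveryBefore (w : List ℕ) (j i : ℕ) : Prop :=
  ∀ p q : Fin w.length, w.get p = j → w.get q = i → p < q

/-- The word `w` 12-represents the graph `G` on the vertex set `{1, …, n}`:
`w` uses only letters from `{1, …, n}`, contains each of them at least once, and
for `i < j` in `{1, …, n}`, `i` and `j` are adjacent iff every `j` occurs before every `i`. -/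
def Represents12 (n : ℕ) (G : SimpleGraph ℕ) (w : List ℕ) : Prop :=
  (∀ x ∈ w, 1 ≤ x ∧ x ≤ n) ∧
  (∀ i, 1 ≤ i → i ≤ n → i ∈ w) ∧
  (∀ i j, 1 ≤ i → i < j → j ≤ n → (G.Adj i j ↔ EveryBefore w j i))

/-- `w` is a permutation of `{1, …, n}`, i.e. each letter occurs exactly once. -/
def IsPermWord (n : ℕ) (w : List ℕ) : Prop :=
  w.Perm (List.range' 1 n)

/-- `w` avoids the pattern 231: no subsequence b, c, a with a < b < c. -/
def Avoids231 (w : List ℕ) : Prop :=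
  ¬ ∃ p q r : Fin w.length, p < q ∧ q < r ∧ w.get r < w.get p ∧ w.get p < w.get q


noncomputable def splitPt (G : SimpleGraph ℕ) (a b : ℕ) : ℕ :=
  sInf {x | (a ≤ x ∧ x < b ∧ G.Adj x b) ∨ x = b}

lemma splitPt_mem (G : SimpleGraph ℕ) (a b : ℕ) :
    (a ≤ splitPt G a b ∧ splitPt G a b < b ∧ G.Adj (splitPt G a b) b) ∨ splitPt G a b = b := by
  have h : splitPt G a b ∈ {x | (a ≤ x ∧ x < b ∧ G.Adj x b) ∨ x = b} :=
    Nat.sInf_mem ⟨b, Or.inr rfl⟩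
  exact h

lemma splitPt_le (G : SimpleGraph ℕ) (a b : ℕ) : splitPt G a b ≤ b :=
  Nat.sInf_le (show b ∈ {x | (a ≤ x ∧ x < b ∧ G.Adj x b) ∨ x = b} from Or.inr rfl)

lemma splitPt_ge (G : SimpleGraph ℕ) {a b : ℕ} (hab : a ≤ b) : a ≤ splitPt G a b := by
  rcases splitPt_mem G a b with h | h
  · exact h.1
  · omega

lemma splitPt_min (G : SimpleGraph ℕ) {a b x : ℕ} (h1 : a ≤ x) (h2 : x < b)
    (h3 : G.Adj x b) : splitPt G a b ≤ x :=
  Nat.sInf_le (show x ∈ {x | (a ≤ x ∧ x < b ∧ G.Adj x b) ∨ x = b} from Or.inl ⟨h1, h2, h3⟩)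

noncomputable def repWord (G : SimpleGraph ℕ) : ℕ → ℕ → List ℕ
  | a, b =>
    if b < a ∨ a = 0 then [] else
      repWord G a (splitPt G a b - 1) ++ b :: repWord G (splitPt G a b) (b - 1)
  termination_by a b => b + 1 - a
  decreasing_by
  · have h1 := splitPt_ge G (by omega : a ≤ b)
    have h2 := splitPt_le G a b
    omega
  · have h1 := splitPt_ge G (by omega : a ≤ b)
    have h2 := splitPt_le G a b
    omega

lemma repWord_eq (G : SimpleGraph ℕ) {a b : ℕ} (ha : 1 ≤ a) (hab : a ≤ b) :
    repWord G a b =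
      repWord G a (splitPt G a b - 1) ++ b :: repWord G (splitPt G a b) (b - 1) := by
  rw [repWord]
  simp only [if_neg (by omega : ¬(b < a ∨ a = 0))]

lemma repWord_nil (G : SimpleGraph ℕ) {a b : ℕ} (h : b < a ∨ a = 0) :
    repWord G a b = [] := by
  rw [repWord, if_pos h]


lemma two_sublist : ∀ (w : List ℕ) (p q : ℕ) (hq : q < w.length) (hpq : p < q),
    List.Sublist [w[p]'(by omega), w[q]] w := by
  intro w
  induction w with
  | nil => intro p q hq; simp at hq
  | cons a t ih =>
    intro p q hq hpq
    match p, q with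
    | 0, q + 1 =>
      simp only [List.getElem_cons_zero, List.getElem_cons_succ]
      exact List.cons_sublist_cons.2 (List.singleton_sublist.2 (List.getElem_mem _))
    | p + 1, q + 1 =>
      simp only [List.getElem_cons_succ]
      exact (ih p q (by simpa using hq) (by omega)).cons a

lemma three_sublist : ∀ (w : List ℕ) (p q r : ℕ) (hr : r < w.length) (hpq : p < q) (hqr : q < r),
    List.Sublist [w[p]'(by omega), w[q]'(by omega), w[r]] w := by
  intro w
  induction w with
  | nil => intro p q r hr; simp at hr
  | cons a t ih =>
    intro p q r hr hpq hqr
    match p, q, r with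
    | 0, q + 1, r + 1 =>
      simp only [List.getElem_cons_zero, List.getElem_cons_succ]
      exact List.cons_sublist_cons.2 (two_sublist t q r (by simpa using hr) (by omega))
    | p + 1, q + 1, r + 1 =>
      simp only [List.getElem_cons_succ]
      exact (ih p q r (by simpa using hr) (by omega) (by omega)).cons a

lemma pair_sublist_of_mem {w : List ℕ} {x y : ℕ} (hx : x ∈ w) (hy : y ∈ w) (hne : x ≠ y) :
    List.Sublist [x, y] w ∨ List.Sublist [y, x] w := by
  induction w with
  | nil => simp at hx
  | cons a t ih =>
    by_cases hax : a = x
    · subst hax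
      have hyt : y ∈ t := by
        rcases List.mem_cons.1 hy with h | h
        · omega
        · exact h
      exact Or.inl (List.cons_sublist_cons.2 (List.singleton_sublist.2 hyt))
    · by_cases hay : a = y
      · subst hay
        have hxt : x ∈ t := by 
          rcases List.mem_cons.1 hx with h | h
          · exact absurd h.symm hax
          · exact h
        exact Or.inr (List.cons_sublist_cons.2 (List.singleton_sublist.2 hxt))
      · have hxt : x ∈ t := by 
          rcases List.mem_cons.1 hx with h | h
          · exact absurd h.symm hax
          · exact h
        have hyt : y ∈ t := by 
          rcases List.mem_cons.1 hy with h | h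
          · exact absurd h.symm hay
          · exact h
        rcases ih hxt hyt with h | h
        · exact Or.inl (h.cons a)
        · exact Or.inr (h.cons a)

lemma avoids231_of_no_sublist {w : List ℕ}
    (h : ¬ ∃ x y z : ℕ, x < y ∧ y < z ∧ List.Sublist [y, z, x] w) : Avoids231 w := by
  rintro ⟨p, q, r, hpq, hqr, h1, h2⟩
  exact h ⟨w.get r, w.get p, w.get q, h1, h2, by
    have := three_sublist w p q r r.isLt hpq hqr
    simpa [List.get_eq_getElem] using this⟩

lemma not_everyBefore_of_sublist {w : List ℕ} {i j : ℕ} (h : List.Sublist [i, j] w) :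
    ¬ EveryBefore w j i := by
  intro hev
  rw [List.sublist_iff_exists_fin_orderEmbedding_get_eq] at h
  obtain ⟨f, hf⟩ := h
  have h0 := hf ⟨0, by simp⟩
  have h1 := hf ⟨1, by simp⟩
  simp only [List.get_eq_getElem] at h0 h1
  have := hev (f ⟨1, by simp⟩) (f ⟨0, by simp⟩) h1.symm h0.symm
  have h01 : (⟨0, by simp⟩ : Fin [i,j].length) < ⟨1, by simp⟩ := by
    simp [Fin.lt_def]
  exact absurd (f.strictMono h01) (by
    intro hlt
    exact absurd this (not_lt.2 hlt.le))

lemma everyBefore_of_sublist {w : List ℕ} (hw : w.Nodup) {i j : ℕ}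
    (h : List.Sublist [j, i] w) : EveryBefore w j i := by
  rw [List.sublist_iff_exists_fin_orderEmbedding_get_eq] at h
  obtain ⟨f, hf⟩ := h
  have h0 := hf ⟨0, by simp⟩
  have h1 := hf ⟨1, by simp⟩
  simp only [List.get_eq_getElem] at h0 h1
  intro p q hp hq
  have hpe : p = f ⟨0, by simp⟩ := by
    apply (List.Nodup.get_inj_iff hw).1
    simp only [List.get_eq_getElem] at hp ⊢
    rw [hp, ← h0]; rfl
  have hqe : q = f ⟨1, by simp⟩ := by
    apply (List.Nodup.get_inj_iff hw).1
    simp only [List.get_eq_getElem] at hq ⊢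
    rw [hq, ← h1]; rfl
  rw [hpe, hqe]
  exact f.strictMono (by simp [Fin.lt_def])

lemma everyBefore_iff_sublist {w : List ℕ} (hw : w.Nodup) {i j : ℕ}
    (hi : i ∈ w) (hj : j ∈ w) (hne : j ≠ i) :
    EveryBefore w j i ↔ List.Sublist [j, i] w := by
  constructor
  · intro hev
    rcases pair_sublist_of_mem hj hi hne with h | h
    · exact h
    · exact absurd hev (not_everyBefore_of_sublist h)
  · exact everyBefore_of_sublist hw

lemma main_lemma (G : SimpleGraph ℕ) (n : ℕ)
    (hA : ∀ x y z, 1 ≤ x → x < y → y < z → z ≤ n → G.Adj x z → G.Adj y z)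
    (hB : ∀ x y z, 1 ≤ x → x < y → y < z → z ≤ n → G.Adj x y → G.Adj y z → G.Adj x z)
    (a b : ℕ) (ha : 1 ≤ a) (hb : b ≤ n) :
    (repWord G a b).Perm (List.range' a (b + 1 - a)) ∧
    (¬ ∃ x y z : ℕ, x < y ∧ y < z ∧ List.Sublist [y, z, x] (repWord G a b)) ∧
    (∀ x y, a ≤ x → x < y → y ≤ b →
      (G.Adj x y ↔ List.Sublist [y, x] (repWord G a b))) := by
  by_cases hab : b < a
  · have hnil : repWord G a b = [] := repWord_nil G (Or.inl hab)
    have hr : b + 1 - a = 0 := by omega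
    refine ⟨by rw [hnil, hr]; exact List.Perm.refl _, ?_, ?_⟩
    · rintro ⟨x, y, z, _, _, hsub⟩
      rw [hnil] at hsub
      simpa using List.sublist_nil.1 hsub
    · intro x y hx hxy hy
      omega
  · push_neg at hab
    set c := splitPt G a b with hc
    have hc1 : a ≤ c := splitPt_ge G hab
    have hc2 : c ≤ b := splitPt_le G a b
    have hadjb : ∀ x, a ≤ x → x < b → (G.Adj x b ↔ c ≤ x) := by
      intro x hax hxb
      constructor
      · intro hadj
        exact splitPt_min G hax hxb hadj
      · intro hcx
        rcases splitPt_mem G a b with ⟨_, hcb, hadj⟩ | hcb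
        · rcases eq_or_lt_of_le hcx with h | h
          · rwa [← h]
          · exact hA c x b (by omega) h hxb hb hadj
        · omega
    have hcross : ∀ x y, a ≤ x → x < c → c ≤ y → y ≤ b → ¬ G.Adj x y := by
      intro x y hax hxc hcy hyb hadj
      rcases eq_or_lt_of_le hyb with h | h
      · subst h
        have := (hadjb x hax (by omega)).1 hadj
        omega
      · have hyadj : G.Adj y b := (hadjb y (by omega) h).2 hcy
        have := (hadjb x hax (by omega)).1 (hB x y b (by omega) (by omega) h hb hadj hyadj)
        omega
    have IH1 := main_lemma G n hA hB a (c - 1) ha (by omega)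
    have IH2 := main_lemma G n hA hB c (b - 1) (by omega) (by omega)
    obtain ⟨perm1, avoid1, adj1⟩ := IH1
    obtain ⟨perm2, avoid2, adj2⟩ := IH2
    set w1 := repWord G a (c - 1) with hw1
    set w2 := repWord G c (b - 1) with hw2
    have e1 : c - 1 + 1 - a = c - a := by omega
    have e2 : b - 1 + 1 - c = b - c := by omega
    rw [e1] at perm1
    rw [e2] at perm2
    have mem1 : ∀ x ∈ w1, a ≤ x ∧ x < c := by
      intro x hx
      have := List.mem_range'_1.1 (perm1.mem_iff.1 hx)
      omega
    have mem2 : ∀ x ∈ w2, c ≤ x ∧ x < b := by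
      intro x hx
      have := List.mem_range'_1.1 (perm2.mem_iff.1 hx)
      omega
    have mem1' : ∀ x, a ≤ x → x < c → x ∈ w1 := by
      intro x h1 h2
      exact perm1.mem_iff.2 (List.mem_range'_1.2 ⟨h1, by omega⟩)
    have mem2' : ∀ x, c ≤ x → x < b → x ∈ w2 := by
      intro x h1 h2
      exact perm2.mem_iff.2 (List.mem_range'_1.2 ⟨h1, by omega⟩)
    have weq : repWord G a b = w1 ++ b :: w2 := repWord_eq G ha hab
    rw [weq]
    have hmembcons : ∀ x ∈ b :: w2, c ≤ x ∧ x ≤ b := by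
      intro x hx
      rcases List.mem_cons.1 hx with h | h
      · omega
      · have := mem2 x h; omega
    refine ⟨?_, ?_, ?_⟩
    · -- permutation
      have k3 : List.range' a (c - a) ++ List.range' c (b - c) = List.range' a (b - a) := by
        have h := @List.range'_append a (c - a) (b - c) 1
        rw [show a + 1 * (c - a) = c from by omega] at h
        rw [h]
        congr 1
        omega
      have k2 : List.range' a (b + 1 - a) = List.range' a (b - a) ++ [b] := by
        rw [show b + 1 - a = (b - a) + 1 from by omega, List.range'_1_concat]
        congr 2
        omega
      rw [k2, ← k3, List.append_assoc]
      refine List.Perm.append perm1 ?_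
      exact (perm2.cons b).trans (List.perm_append_singleton b _).symm
    · -- 231-avoidance
      rintro ⟨x, y, z, hxy, hyz, hsub⟩
      rw [List.sublist_append_iff] at hsub
      obtain ⟨l1, l2, heq, hs1, hs2⟩ := hsub
      rcases l1 with _ | ⟨u1, l1⟩
      · -- l1 = [], [y,z,x] <+ b :: w2
        simp only [List.nil_append] at heq
        subst heq
        cases hs2 with
        | cons _ h => exact avoid2 ⟨x, y, z, hxy, hyz, h⟩
        | cons_cons _ h =>
          have hz : z ∈ w2 := h.subset (by simp)
          have := mem2 z hz
          omega
      · simp only [List.cons_append] at heq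
        obtain ⟨h1eq, heqB⟩ := List.cons_eq_cons.mp heq
        rcases l1 with _ | ⟨u2, l1⟩
        · -- l1 = [y], l2 = [z,x]
          simp only [List.nil_append] at heqB
          have hy1 : u1 ∈ w1 := hs1.subset (by simp)
          have hy := mem1 _ hy1
          have hx2 : x ∈ b :: w2 := (heqB ▸ hs2).subset (by simp)
          have := hmembcons x hx2
          omega
        · simp only [List.cons_append] at heqB
          obtain ⟨h2eq, heqC⟩ := List.cons_eq_cons.mp heqB
          rcases l1 with _ | ⟨u3, l1⟩
          · -- l1 = [y,z], l2 = [x]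
            simp only [List.nil_append] at heqC
            have hz1 : u2 ∈ w1 := hs1.subset (by simp)
            have hz := mem1 _ hz1
            have hx2 : x ∈ b :: w2 := (heqC ▸ hs2).subset (by simp)
            have := hmembcons x hx2
            omega
          · -- l1 = [y,z,x] ++ junk, junk = []
            obtain ⟨h3eq, heqD⟩ := List.cons_eq_cons.mp heqC
            obtain ⟨rfl, rfl⟩ := List.append_eq_nil_iff.mp heqD.symm
            rw [← h1eq, ← h2eq, ← h3eq] at hs1
            exact avoid1 ⟨x, y, z, hxy, hyz, hs1⟩
    · -- adjacency
      intro x y hax hxy hyb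
      constructor
      · intro hadj
        rcases eq_or_lt_of_le hyb with rfl | hyb'
        · -- y = b
          have hcx : c ≤ x := (hadjb x hax hxy).1 hadj
          have hx2 : x ∈ w2 := mem2' x hcx hxy
          exact (List.cons_sublist_cons.2 (List.singleton_sublist.2 hx2)).trans
            (List.sublist_append_right w1 _)
        · by_cases hxc : x < c
          · by_cases hyc : y < c
            · exact ((adj1 x y hax hxy (by omega)).1 hadj).trans
                (List.sublist_append_left w1 _)
            · exact absurd hadj (hcross x y hax hxc (by omega) hyb)
          · -- c ≤ x < y < b : both in w2
            have h2 := (adj2 x y (by omega) hxy (by omega)).1 hadj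
            exact (h2.cons b).trans (List.sublist_append_right w1 _)
      · intro hsub
        rw [List.sublist_append_iff] at hsub
        obtain ⟨l1, l2, heq, hs1, hs2⟩ := hsub
        rcases l1 with _ | ⟨u1, l1⟩
        · -- [y,x] <+ b :: w2
          simp only [List.nil_append] at heq
          subst heq
          cases hs2 with
          | cons _ h =>
            have hx := mem2 _ (h.subset (by simp : x ∈ [y, x]))
            have hy := mem2 _ (h.subset (by simp : y ∈ [y, x]))
            exact (adj2 x y hx.1 hxy (by omega)).2 h
          | cons_cons _ h =>
            have hx : x ∈ w2 := h.subset (by simp)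
            have := mem2 _ hx
            exact (hadjb x (by omega) (by omega)).2 this.1
        · simp only [List.cons_append] at heq
          obtain ⟨h1eq, heqB⟩ := List.cons_eq_cons.mp heq
          rcases l1 with _ | ⟨u2, l1⟩
          · -- l1 = [y], l2 = [x]
            simp only [List.nil_append] at heqB
            have hy := mem1 _ (hs1.subset (by simp : u1 ∈ [u1]))
            have hx := hmembcons x ((heqB ▸ hs2).subset (by simp : x ∈ [x]))
            omega
          · -- l1 = [y,x]
            obtain ⟨h2eq, heqC⟩ := List.cons_eq_cons.mp heqB
            obtain ⟨rfl, rfl⟩ := List.append_eq_nil_iff.mp heqC.symm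
            rw [← h1eq, ← h2eq] at hs1
            have hx := mem1 _ (hs1.subset (by simp : x ∈ [y, x]))
            have hy := mem1 _ (hs1.subset (by simp : y ∈ [y, x]))
            exact (adj1 x y hx.1 hxy (by omega)).2 hs1
termination_by b + 1 - a

theorem stmt_7 (n : ℕ) (G : SimpleGraph ℕ) :
    (∃ w, Avoids231 w ∧ Represents12 n G w) ↔
    ((¬ ∃ x y z, 1 ≤ x ∧ x < y ∧ y < z ∧ z ≤ n ∧ G.Adj x z ∧ ¬ G.Adj y z) ∧
     (¬ ∃ x y z, 1 ≤ x ∧ x < y ∧ y < z ∧ z ≤ n ∧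
        G.Adj x y ∧ G.Adj y z ∧ ¬ G.Adj x z)) := by
  constructor
  · rintro ⟨w, hav, hmem, hall, hadj⟩
    constructor
    · rintro ⟨x, y, z, hx, hxy, hyz, hzn, haxz, hnyz⟩
      have hEB : EveryBefore w z x := (hadj x z hx (by omega) hzn).1 haxz
      have hnEB : ¬ EveryBefore w z y := fun h => hnyz ((hadj y z (by omega) hyz hzn).2 h)
      unfold EveryBefore at hnEB
      push_neg at hnEB
      obtain ⟨p, q, hp, hq, hnpq⟩ := hnEB
      have hqp : q < p := by
        rcases eq_or_lt_of_le hnpq with h' | h'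
        · rw [h', hp] at hq; omega
        · exact h'
      obtain ⟨r, hr⟩ := List.mem_iff_get.1 (hall x hx (by omega))
      have hpr : p < r := hEB p r hp hr
      exact hav ⟨q, p, r, hqp, hpr, by rw [hr, hq]; omega, by rw [hq, hp]; omega⟩
    · rintro ⟨x, y, z, hx, hxy, hyz, hzn, hxyE, hyzE, hnxz⟩
      have EB1 : EveryBefore w y x := (hadj x y hx hxy (by omega)).1 hxyE
      have EB2 : EveryBefore w z y := (hadj y z (by omega) hyz hzn).1 hyzE
      obtain ⟨m, hm⟩ := List.mem_iff_get.1 (hall y (by omega) (by omega))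
      have : EveryBefore w z x := fun p q hp hq => (EB2 p m hp hm).trans (EB1 m q hm hq)
      exact hnxz ((hadj x z hx (by omega) hzn).2 this)
  · rintro ⟨h1, h2⟩
    have hA : ∀ x y z, 1 ≤ x → x < y → y < z → z ≤ n → G.Adj x z → G.Adj y z := by
      intro x y z hx hxy hyz hzn hadj
      by_contra hn
      exact h1 ⟨x, y, z, hx, hxy, hyz, hzn, hadj, hn⟩
    have hB : ∀ x y z, 1 ≤ x → x < y → y < z → z ≤ n → G.Adj x y → G.Adj y z → G.Adj x z := by
      intro x y z hx hxy hyz hzn ha1 ha2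
      by_contra hn
      exact h2 ⟨x, y, z, hx, hxy, hyz, hzn, ha1, ha2, hn⟩
    obtain ⟨perm, avoid, adj⟩ := main_lemma G n hA hB 1 n le_rfl le_rfl
    set w := repWord G 1 n with hw
    rw [show n + 1 - 1 = n from by omega] at perm
    have hnodup : w.Nodup := perm.nodup_iff.mpr (List.nodup_range' (s := 1) (n := n))
    have hmemw : ∀ x, x ∈ w ↔ 1 ≤ x ∧ x ≤ n := by
      intro x
      rw [perm.mem_iff, List.mem_range'_1]
      omega
    refine ⟨w, avoids231_of_no_sublist avoid, ?_, ?_, ?_⟩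
    · intro x hx
      exact (hmemw x).1 hx
    · intro i hi hin
      exact (hmemw i).2 ⟨hi, hin⟩
    · intro i j hi hij hjn
      rw [everyBefore_iff_sublist hnodup ((hmemw i).2 ⟨by omega, by omega⟩)
        ((hmemw j).2 ⟨by omega, hjn⟩) (by omega)]
      exact adj i j hi hij hjn
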